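/- arXiv:0804.2305 — 3 statements merged into one kernel-verified Lean document; each statement's English description precedes it below -/
import Mathlib

section
/- In the affine Coxeter group W of type Ã₂, generated by s₁, s₂, s₃ subject to sᵢ² = 1 and (sᵢsⱼ)³ = 1 for i ≠ j, the element w = (s₂s₁s₃)^m has Coxeter length ℓ(w) = 3m for every m ≥ 0, and consequently ℓ(w²) = 2ℓ(w). -/
/-- The Coxeter matrix of affine type Ã₂: three generators, all pairwise orders 3. -/
def AffineA2 : CoxeterMatrix (Fin 3) where
  M := Matrix.of fun i j => if i = j then 1 else 3
  isSymm := by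
    ext i j
    by_cases h : i = j <;> simp [Matrix.of_apply, h, eq_comm, Matrix.transpose]
  diagonal i := by simp [Matrix.of_apply]
  off_diagonal i j h := by simp [Matrix.of_apply, h]

namespace AffineA2Aux

/-- The affine action of Ã₂ on the root lattice of A₂ (in the simple-root basis,
with translations scaled by 3), written as 3×3 integer matrices. -/
def A : Fin 3 → Matrix (Fin 3) (Fin 3) ℤ :=
  ![!![0,-1,3; -1,0,3; 0,0,1], !![-1,1,0; 0,1,0; 0,0,1], !![1,0,0; 1,-1,0; 0,0,1]]

theorem liftA : AffineA2.IsLiftable A := by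
  unfold CoxeterMatrix.IsLiftable; decide

/-- The six roots of A₂ (with vanishing affine coordinate). -/
def Rts : List (Fin 3 → ℤ) := [![1,0,0], ![-1,0,0], ![0,1,0], ![0,-1,0], ![1,1,0], ![-1,-1,0]]

theorem rstep : ∀ i : Fin 3, ∀ v ∈ Rts, (A i).mulVec v ∈ Rts := by decide

/-- The linear functional used to measure progress. -/
def F (v : Fin 3 → ℤ) : ℤ := -3 * v 0 + 3 * v 1

theorem Fsmall : ∀ v ∈ Rts, |F v| ≤ 3 := by decide

theorem Fsub (u v : Fin 3 → ℤ) : F (u - v) = F u - F v := by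
  simp only [F, Pi.sub_apply]; ring

/-- The base point (barycenter of the fundamental alcove, scaled by 3). -/
def X : Fin 3 → ℤ := ![1, 1, 1]

theorem stepRts : ∀ i : Fin 3, (A i).mulVec X - X ∈ Rts := by decide

/-- The matrix of the Coxeter element `s₁ s₀ s₂`. -/
def C : Matrix (Fin 3) (Fin 3) ℤ := !![0,-1,0; -1,0,3; 0,0,1]

theorem Ceq : A 1 * A 0 * A 2 = C := by decide

theorem C_mulVec (v : Fin 3 → ℤ) :
    C.mulVec v = ![-(v 1), -(v 0) + 3 * v 2, v 2] := by
  funext i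
  fin_cases i <;>
    simp [C, Matrix.mulVec, dotProduct, Fin.sum_univ_three] 

theorem C_pow (m : ℕ) :
    F ((C ^ m).mulVec X) = 9 * m ∧ ((C ^ m).mulVec X) 2 = 1 := by
  induction m with
  | zero => constructor <;> simp [Matrix.one_mulVec, F, X]
  | succ m ih =>
    obtain ⟨h1, h2⟩ := ih
    have hp : (C ^ (m + 1)).mulVec X = C.mulVec ((C ^ m).mulVec X) := by
      rw [Matrix.mulVec_mulVec, ← pow_succ']
    rw [hp, C_mulVec]
    constructor
    · simp only [F] at h1 ⊢
      simp only [Matrix.cons_val_zero, Matrix.cons_val_one, Matrix.head_cons]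
      push_cast
      rw [h2] at *
      linarith [h1]
    · simpa using h2

end AffineA2Aux

open AffineA2Aux in
/-- In the affine Coxeter group of type Ã₂ with generators `s₀, s₁, s₂`
(relations `sᵢ² = 1`, `(sᵢsⱼ)³ = 1` for `i ≠ j`), the element
`w = (s₁ s₀ s₂)^m` has Coxeter length `3m` for every `m ≥ 0`, and consequently
`ℓ(w²) = 2 ℓ(w)`. -/
theorem length_pow_s2s1s3_affineA2 {W : Type*} [Group W]
    (cs : CoxeterSystem AffineA2 W) (m : ℕ) :
    cs.length ((cs.simple 1 * cs.simple 0 * cs.simple 2) ^ m) = 3 * m ∧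
    cs.length (((cs.simple 1 * cs.simple 0 * cs.simple 2) ^ m) ^ 2) =
      2 * cs.length ((cs.simple 1 * cs.simple 0 * cs.simple 2) ^ m) := by
  set c : W := cs.simple 1 * cs.simple 0 * cs.simple 2 with hc
  -- the representation
  let π : W →* Matrix (Fin 3) (Fin 3) ℤ := cs.lift ⟨A, liftA⟩
  have hπs : ∀ i : Fin 3, π (cs.simple i) = A i := fun i =>
    cs.lift_apply_simple liftA i
  -- orbit of roots stays in the root set
  have orbit : ∀ l : List (Fin 3), ∀ v ∈ Rts, (π (cs.wordProd l)).mulVec v ∈ Rts := by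
    intro l
    induction l with
    | nil => intro v hv; simpa [Matrix.one_mulVec] using hv
    | cons i l ih =>
      intro v hv
      rw [cs.wordProd_cons, map_mul, hπs, ← Matrix.mulVec_mulVec]
      exact rstep i _ (ih v hv)
  -- the key subadditive bound
  have key : ∀ l : List (Fin 3),
      |F ((π (cs.wordProd l)).mulVec X)| ≤ 3 * l.length := by
    intro l
    induction l using List.reverseRecOn with
    | nil => simp [Matrix.one_mulVec, F, X]
    | append_singleton l a ih =>
      have hw : cs.wordProd (l ++ [a]) = cs.wordProd l * cs.simple a := by
        rw [cs.wordProd_append]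
        simp [CoxeterSystem.wordProd]
      set P : Matrix (Fin 3) (Fin 3) ℤ := π (cs.wordProd l) with hP
      have hx : (A a).mulVec X = X + ((A a).mulVec X - X) := by abel
      have hsplit : (π (cs.wordProd (l ++ [a]))).mulVec X =
          P.mulVec X + P.mulVec ((A a).mulVec X - X) := by
        conv_lhs => rw [hw, map_mul, hπs, ← Matrix.mulVec_mulVec, hx, Matrix.mulVec_add]
      rw [hsplit]
      have hmem : P.mulVec ((A a).mulVec X - X) ∈ Rts := orbit l _ (stepRts a)
      have h3 : |F (P.mulVec ((A a).mulVec X - X))| ≤ 3 := Fsmall _ hmem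
      have hFadd : F (P.mulVec X + P.mulVec ((A a).mulVec X - X)) =
          F (P.mulVec X) + F (P.mulVec ((A a).mulVec X - X)) := by
        simp only [F, Pi.add_apply]; ring
      rw [hFadd]
      calc |F (P.mulVec X) + F (P.mulVec ((A a).mulVec X - X))|
          ≤ |F (P.mulVec X)| + |F (P.mulVec ((A a).mulVec X - X))| := abs_add_le _ _
        _ ≤ 3 * l.length + 3 := add_le_add ih h3
        _ = 3 * (l ++ [a]).length := by simp; ring
  -- lower bound for arbitrary elements
  have lower : ∀ w : W, |F ((π w).mulVec X)| ≤ 3 * cs.length w := by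
    intro w
    obtain ⟨l, hl, rfl⟩ := cs.exists_reduced_word w
    calc |F ((π (cs.wordProd l)).mulVec X)| ≤ 3 * l.length := key l
      _ = 3 * cs.length (cs.wordProd l) := by rw [hl]
  -- value on powers of the Coxeter element
  have hπc : π c = C := by rw [hc]; simp only [map_mul, hπs]; exact Ceq
  have hval : ∀ k : ℕ, F ((π (c ^ k)).mulVec X) = 9 * k := by
    intro k
    rw [map_pow, hπc]
    exact (C_pow k).1
  -- upper bound
  have hcle : cs.length c ≤ 3 := by
    have : c = cs.wordProd [1, 0, 2] := by
      simp [hc, CoxeterSystem.wordProd, mul_assoc]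
    rw [this]
    simpa using cs.length_wordProd_le [1, 0, 2]
  have upper : ∀ k : ℕ, cs.length (c ^ k) ≤ 3 * k := by
    intro k
    induction k with
    | zero => simp
    | succ k ih =>
      calc cs.length (c ^ (k + 1)) = cs.length (c ^ k * c) := by rw [pow_succ]
        _ ≤ cs.length (c ^ k) + cs.length c := cs.length_mul_le _ _
        _ ≤ 3 * k + 3 := add_le_add ih hcle
        _ = 3 * (k + 1) := by ring
  -- combine
  have main : ∀ k : ℕ, cs.length (c ^ k) = 3 * k := by
    intro k
    have h1 := lower (c ^ k)
    rw [hval k] at h1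
    have h2 : (9 : ℤ) * k ≤ 3 * cs.length (c ^ k) := by
      calc (9 : ℤ) * k = |9 * (k : ℤ)| := by
            rw [abs_of_nonneg]; positivity
        _ ≤ 3 * cs.length (c ^ k) := h1
    have h3 : 3 * k ≤ cs.length (c ^ k) := by
      have := h2
      push_cast at this
      omega
    exact le_antisymm (upper k) h3
  refine ⟨main m, ?_⟩
  rw [← pow_mul, main m, main (m * 2)]
  ring
end

section
/- In the affine Coxeter group W of type Ã₂ with generators s₁, s₂, s₃ (relations sᵢ² = 1, (sᵢsⱼ)³ = 1 for i ≠ j), let w = s_{i₁}s_{i₂}⋯s_{i_n} be a word in which consecutive indices satisfy i_k − i_{k+1} ≡ 1 (mod 3) for all k (a 'type 1' word). If ℓ(w²) = 2n, then n is a multiple of 3. -/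
private lemma aux_cancel {W : Type*} [Group W] (cs : CoxeterSystem AffineA2 W)
    (A B : List (Fin 3)) (i : Fin 3) :
    cs.length (cs.wordProd (A ++ i :: i :: B)) ≤ A.length + B.length := by
  have h : cs.wordProd (A ++ i :: i :: B) = cs.wordProd (A ++ B) := by
    rw [cs.wordProd_append, cs.wordProd_append, cs.wordProd_cons, cs.wordProd_cons,
      cs.simple_mul_simple_cancel_left]
  rw [h]
  simpa using cs.length_wordProd_le (A ++ B)

private lemma aux_braid {W : Type*} [Group W] (cs : CoxeterSystem AffineA2 W)
    (A B : List (Fin 3)) (i j : Fin 3) (hij : i ≠ j) :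
    cs.length (cs.wordProd (A ++ i :: j :: i :: j :: B)) ≤ A.length + B.length + 2 := by
  have hM : AffineA2.M i j = 3 := by simp [AffineA2, hij]
  have hrel : (cs.simple i * cs.simple j) ^ 3 = 1 := by
    have := cs.simple_mul_simple_pow i j
    rwa [hM] at this
  have h2 : cs.simple i * cs.simple j * (cs.simple i * cs.simple j)
      = cs.simple j * cs.simple i := by
    have h3 : (cs.simple i * cs.simple j) ^ 2 = (cs.simple i * cs.simple j)⁻¹ := by
      rw [eq_inv_iff_mul_eq_one, ← pow_succ]; exact hrel
    rw [← sq, h3, mul_inv_rev, cs.inv_simple, cs.inv_simple]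
  have h : cs.wordProd (A ++ i :: j :: i :: j :: B) = cs.wordProd (A ++ j :: i :: B) := by
    rw [cs.wordProd_append, cs.wordProd_append]
    congr 1
    simp only [cs.wordProd_cons, ← mul_assoc]
    rw [mul_assoc (cs.simple i * cs.simple j) (cs.simple i) (cs.simple j), h2]
  rw [h]
  calc cs.length (cs.wordProd (A ++ j :: i :: B)) ≤ (A ++ j :: i :: B).length :=
        cs.length_wordProd_le _
    _ = A.length + B.length + 2 := by simp; omega

open Fin.NatCast Fin.CommRing in
/-- In the affine Coxeter group of type Ã₂, let `w = s_{i₁} ⋯ s_{i_n}` be a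
"type 1" word: consecutive indices satisfy `i_{k+1} = i_k - 1 (mod 3)`.
If `ℓ(w²) = 2n`, then `n` is a multiple of `3`. -/
theorem type_one_word_length_sq_imp_three_dvd {W : Type*} [Group W]
    (cs : CoxeterSystem AffineA2 W) (n : ℕ) (f : Fin n → Fin 3)
    (hstep : ∀ (k : ℕ) (h : k + 1 < n),
      f ⟨k + 1, h⟩ = f ⟨k, Nat.lt_of_succ_lt h⟩ - 1)
    (hlen : cs.length ((cs.wordProd (List.ofFn f)) ^ 2) = 2 * n) :
    3 ∣ n := by
  by_contra hdvd
  have h0 : 0 < n := by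
    rcases Nat.eq_zero_or_pos n with h | h
    · exact absurd (h ▸ dvd_zero 3) hdvd
    · exact h
  set a : Fin 3 := f ⟨0, h0⟩ with ha
  have hf : ∀ k (hk : k < n), f ⟨k, hk⟩ = a - (k : Fin 3) := by
    intro k
    induction k with
    | zero => intro hk; simp [ha]
    | succ k ih =>
      intro hk
      rw [hstep k hk, ih (Nat.lt_of_succ_lt hk)]
      push_cast
      ring
  have hsq : cs.wordProd (List.ofFn f) ^ 2 = cs.wordProd (List.ofFn f ++ List.ofFn f) := by
    rw [cs.wordProd_append, sq]
  have h3 : n % 3 = 0 ∨ n % 3 = 1 ∨ n % 3 = 2 := by omega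
  rcases h3 with hm | hm | hm
  · exact hdvd (Nat.dvd_of_mod_eq_zero hm)
  · -- n ≡ 1 (mod 3): last letter of the first copy equals the first letter of the second
    obtain ⟨m, rfl⟩ : ∃ m, n = m + 1 := ⟨n - 1, by omega⟩
    have hm3 : 3 ∣ m := by omega
    have hlast : f (Fin.last m) = a := by
      have := hf m (Nat.lt_succ_self m)
      have hcast : ((m : ℕ) : Fin 3) = 0 := Fin.natCast_eq_zero.mpr hm3
      have hfl : f (Fin.last m) = f ⟨m, Nat.lt_succ_self m⟩ := rfl
      rw [hfl, this, hcast, sub_zero]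
    have hfirst : f 0 = a := congrArg f (by ext; simp)
    have hA : List.ofFn f = (List.ofFn fun i : Fin m => f i.castSucc) ++ [a] := by
      rw [List.ofFn_succ' f, List.concat_eq_append, hlast]
    have hB : List.ofFn f = a :: List.ofFn fun i : Fin m => f i.succ := by
      rw [List.ofFn_succ (f := f), hfirst]
    have hdecomp : List.ofFn f ++ List.ofFn f =
        (List.ofFn fun i : Fin m => f i.castSucc) ++
          a :: a :: List.ofFn fun i : Fin m => f i.succ := by
      nth_rewrite 2 [hB]
      rw [hA]
      simp
    have hle := aux_cancel cs (List.ofFn fun i : Fin m => f i.castSucc)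
      (List.ofFn fun i : Fin m => f i.succ) a
    rw [← hdecomp, ← hsq, hlen] at hle
    simp only [List.length_ofFn] at hle
    omega
  · -- n ≡ 2 (mod 3): the middle four letters are a, a-1, a, a-1
    obtain ⟨m, rfl⟩ : ∃ m, n = m + 2 := ⟨n - 2, by omega⟩
    have hm3 : 3 ∣ m := by omega
    have hcast : ((m : ℕ) : Fin 3) = 0 := Fin.natCast_eq_zero.mpr hm3
    have hv1 : f ((Fin.last m).castSucc) = a := by
      have h1 : f ((Fin.last m).castSucc) = f ⟨m, by omega⟩ := congrArg f (by ext; simp)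
      rw [h1, hf m (by omega), hcast, sub_zero]
    have hv2 : f (Fin.last (m + 1)) = a - 1 := by
      have h1 : f (Fin.last (m + 1)) = f ⟨m + 1, by omega⟩ := rfl
      rw [h1, hf (m + 1) (by omega)]
      push_cast
      rw [hcast]
      ring_nf
    have hv3 : f 0 = a := congrArg f (by ext; simp)
    have hv4 : f (Fin.succ 0) = a - 1 := by
      have h1 : f (Fin.succ 0) = f ⟨1, by omega⟩ := congrArg f (by ext; simp)
      rw [h1, hf 1 (by omega)]
      norm_num
    have hA : List.ofFn f =
        (List.ofFn fun i : Fin m => f i.castSucc.castSucc) ++ [a, a - 1] := by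
      rw [List.ofFn_succ' f, List.ofFn_succ' fun i : Fin (m + 1) => f i.castSucc,
        List.concat_eq_append, List.concat_eq_append, hv1, hv2]
      simp
    have hB : List.ofFn f = a :: (a - 1) :: List.ofFn fun i : Fin m => f i.succ.succ := by
      rw [List.ofFn_succ (f := f), List.ofFn_succ (f := fun i : Fin (m + 1) => f i.succ), hv3, hv4]
    have hdecomp : List.ofFn f ++ List.ofFn f =
        (List.ofFn fun i : Fin m => f i.castSucc.castSucc) ++
          a :: (a - 1) :: a :: (a - 1) ::
            List.ofFn fun i : Fin m => f i.succ.succ := by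
      nth_rewrite 2 [hB]
      rw [hA]
      simp
    have hne : a ≠ a - 1 := by
      intro h
      have : (1 : Fin 3) = 0 := sub_eq_self.mp h.symm
      simp at this
    have hle := aux_braid cs (List.ofFn fun i : Fin m => f i.castSucc.castSucc)
      (List.ofFn fun i : Fin m => f i.succ.succ) a (a - 1) hne
    rw [← hdecomp, ← hsq, hlen] at hle
    simp only [List.length_ofFn] at hle
    omega
end

section
/- Let F be a nonarchimedean local field with ring of integers O_F, uniformizer π, residue field of size q. Let L = F(λ) be a ramified quadratic extension, with λ a uniformizer of L having minimal polynomial x² − bx − c over F (so ord_π(c) = 1), and embed L^× into GL₂(F) as the matrices [[u, vc],[v, u+vb]] (u,v ∈ F, not both 0). Let U_L = L^× ∩ GL₂(O_F) be the unit group. Then for every m ≥ 1, the double coset U_L · diag(1, π^m) · GL₂(O_F) decomposes into exactly q^m left GL₂(O_F)-cosets. -/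
open Matrix

noncomputable section

variable {F : Type*} [Field F]

/-- `GL₂(O_F)`: the set of `2×2` matrices with entries in `R` invertible over `R`. -/
def Kint2 (R : Subring F) : Set (Matrix (Fin 2) (Fin 2) F) :=
  {g | (∀ i j, g i j ∈ R) ∧ ∃ h : Matrix (Fin 2) (Fin 2) F,
    (∀ i j, h i j ∈ R) ∧ g * h = 1 ∧ h * g = 1}


lemma mem_Kint2_of_det (R : Subring F) (g : Matrix (Fin 2) (Fin 2) F)
    (hg : ∀ i j, g i j ∈ R) (z : F) (hz : z ∈ R)
    (hdet : (g 0 0 * g 1 1 - g 0 1 * g 1 0) * z = 1) : g ∈ Kint2 R := by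
  refine ⟨hg, !![z * g 1 1, -(z * g 0 1); -(z * g 1 0), z * g 0 0], ?_, ?_, ?_⟩
  · intro i j
    fin_cases i <;> fin_cases j <;>
      simp only [Matrix.cons_val', Matrix.cons_val_zero, Matrix.cons_val_one,
        Matrix.head_cons, Matrix.head_fin_const, Matrix.empty_val',
        Matrix.cons_val_fin_one] <;>
      first
        | exact R.mul_mem hz (hg _ _)
        | exact neg_mem (R.mul_mem hz (hg _ _))
  · ext i j
    fin_cases i <;> fin_cases j <;>
      simp [Matrix.mul_apply, Fin.sum_univ_two, Matrix.one_apply] <;>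
      first | linear_combination hdet | ring
  · ext i j
    fin_cases i <;> fin_cases j <;>
      simp [Matrix.mul_apply, Fin.sum_univ_two, Matrix.one_apply] <;>
      first | linear_combination hdet | ring

lemma Kint2.det_unit {R : Subring F} {g : Matrix (Fin 2) (Fin 2) F} (hgK : g ∈ Kint2 R) :
    ∃ e ∈ R, (g 0 0 * g 1 1 - g 0 1 * g 1 0) * e = 1 := by
  obtain ⟨hg, h, hh, h1, _⟩ := hgK
  refine ⟨h 0 0 * h 1 1 - h 0 1 * h 1 0,
    R.sub_mem (R.mul_mem (hh _ _) (hh _ _)) (R.mul_mem (hh _ _) (hh _ _)), ?_⟩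
  have := congrArg Matrix.det h1
  rwa [Matrix.det_mul, Matrix.det_one, Matrix.det_fin_two g, Matrix.det_fin_two h] at this

lemma Kint2.one_mem (R : Subring F) : (1 : Matrix (Fin 2) (Fin 2) F) ∈ Kint2 R := by
  refine ⟨?_, 1, ?_, by simp, by simp⟩ <;>
  · intro i j
    fin_cases i <;> fin_cases j <;> simp [Matrix.one_apply] <;>
      first | exact R.one_mem | exact R.zero_mem

lemma Kint2.mul_mem {R : Subring F} {g g' : Matrix (Fin 2) (Fin 2) F}
    (hg : g ∈ Kint2 R) (hg' : g' ∈ Kint2 R) : g * g' ∈ Kint2 R := by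
  obtain ⟨he, h, hh, h1, h2⟩ := hg
  obtain ⟨he', h', hh', h1', h2'⟩ := hg'
  refine ⟨?_, h' * h, ?_, ?_, ?_⟩
  · intro i j
    rw [Matrix.mul_apply, Fin.sum_univ_two]
    exact R.add_mem (R.mul_mem (he _ _) (he' _ _)) (R.mul_mem (he _ _) (he' _ _))
  · intro i j
    rw [Matrix.mul_apply, Fin.sum_univ_two]
    exact R.add_mem (R.mul_mem (hh' _ _) (hh _ _)) (R.mul_mem (hh' _ _) (hh _ _))
  · rw [mul_assoc, ← mul_assoc g', h1', one_mul, h1]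
  · rw [mul_assoc, ← mul_assoc h, h2, one_mul, h2']

section Units

variable (R : Subring F) (π b c : F)

/-- If the "norm" `u² + uvb - cv²` is a unit of `R` then so is `u`. -/
lemma unit_of_det (hπnotunit : ¬∃ y ∈ R, π * y = 1)
    (hmax : ∀ x ∈ R, (∃ y ∈ R, x * y = 1) ∨ (∃ y ∈ R, x = π * y))
    (hb : ∃ y ∈ R, b = π * y) (hc : ∃ u ∈ R, (∃ u' ∈ R, u * u' = 1) ∧ c = π * u)
    {u v : F} (hu : u ∈ R) (hv : v ∈ R)
    (hd : ∃ e ∈ R, (u * u + u * v * b - c * (v * v)) * e = 1) :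
    ∃ y ∈ R, u * y = 1 := by
  rcases hmax u hu with h | ⟨y, hy, hxy⟩
  · exact h
  · exfalso
    obtain ⟨e, he, hde⟩ := hd
    obtain ⟨β, hβ, hbeq⟩ := hb
    obtain ⟨γ, hγ, _, hceq⟩ := hc
    apply hπnotunit
    refine ⟨(y * u + u * v * β - γ * (v * v)) * e,
      R.mul_mem (R.sub_mem (R.add_mem (R.mul_mem hy hu)
        (R.mul_mem (R.mul_mem hu hv) hβ)) (R.mul_mem hγ (R.mul_mem hv hv))) he, ?_⟩
    rw [← hde, hxy, hbeq, hceq]; ring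

/-- Conversely, if `u` is a unit of `R` then the "norm" is a unit. -/
lemma det_unit_of_unit (hπR : π ∈ R) (hπnotunit : ¬∃ y ∈ R, π * y = 1)
    (hmax : ∀ x ∈ R, (∃ y ∈ R, x * y = 1) ∨ (∃ y ∈ R, x = π * y))
    (hb : ∃ y ∈ R, b = π * y) (hc : ∃ u ∈ R, (∃ u' ∈ R, u * u' = 1) ∧ c = π * u)
    {u v : F} (hu : u ∈ R) (hv : v ∈ R) (huu : ∃ y ∈ R, u * y = 1) :
    ∃ e ∈ R, (u * u + u * v * b - c * (v * v)) * e = 1 := by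
  obtain ⟨β, hβ, hbeq⟩ := hb
  obtain ⟨γ, hγ, _, hceq⟩ := hc
  have hbR : b ∈ R := by rw [hbeq]; exact R.mul_mem hπR hβ
  have hcR : c ∈ R := by rw [hceq]; exact R.mul_mem hπR hγ
  have hdR : u * u + u * v * b - c * (v * v) ∈ R :=
    R.sub_mem (R.add_mem (R.mul_mem hu hu) (R.mul_mem (R.mul_mem hu hv) hbR))
      (R.mul_mem hcR (R.mul_mem hv hv))
  rcases hmax _ hdR with h | ⟨z, hz, hdz⟩
  · exact h
  · exfalso
    obtain ⟨y, hy, huy⟩ := huu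
    apply hπnotunit
    refine ⟨(z - u * v * β + γ * (v * v)) * (y * y),
      R.mul_mem (R.add_mem (R.sub_mem hz (R.mul_mem (R.mul_mem hu hv) hβ))
        (R.mul_mem hγ (R.mul_mem hv hv))) (R.mul_mem hy hy), ?_⟩
    have h2 : u * u * (y * y) = 1 := by linear_combination (u * y + 1) * huy
    rw [hbeq, hceq] at hdz
    linear_combination h2 - (y * y) * hdz


def Aop (b c u v : F) : Matrix (Fin 2) (Fin 2) F := !![u, v * c; v, u + v * b]

lemma Aop_entries (u v : F) :
    Aop b c u v 0 0 = u ∧ Aop b c u v 0 1 = v * c ∧ Aop b c u v 1 0 = v ∧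
      Aop b c u v 1 1 = u + v * b := by
  refine ⟨rfl, rfl, rfl, rfl⟩

lemma AD_eq (m : ℕ) (u v : F) :
    Aop b c u v * Matrix.diagonal ![1, π ^ m] =
      !![u, v * c * π ^ m; v, (u + v * b) * π ^ m] := by
  ext i j
  fin_cases i <;> fin_cases j <;>
    simp [Aop, Matrix.mul_apply, Fin.sum_univ_two, Matrix.diagonal]

lemma aop_mem_Kint2_iff (hπR : π ∈ R) (hπnotunit : ¬∃ y ∈ R, π * y = 1)
    (hmax : ∀ x ∈ R, (∃ y ∈ R, x * y = 1) ∨ (∃ y ∈ R, x = π * y))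
    (hb : ∃ y ∈ R, b = π * y) (hc : ∃ u ∈ R, (∃ u' ∈ R, u * u' = 1) ∧ c = π * u)
    {u v : F} (hu : u ∈ R) (hv : v ∈ R) :
    Aop b c u v ∈ Kint2 R ↔ ∃ y ∈ R, u * y = 1 := by
  have hbR : b ∈ R := by obtain ⟨β, hβ, hbeq⟩ := hb; rw [hbeq]; exact R.mul_mem hπR hβ
  have hcR : c ∈ R := by obtain ⟨γ, hγ, _, hceq⟩ := hc; rw [hceq]; exact R.mul_mem hπR hγ
  constructor
  · intro hK
    obtain ⟨e, he, hde⟩ := Kint2.det_unit hK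
    obtain ⟨h00, h01, h10, h11⟩ := Aop_entries b c u v
    rw [h00, h01, h10, h11] at hde
    exact unit_of_det R π b c hπnotunit hmax hb hc hu hv ⟨e, he, by linear_combination hde⟩
  · intro huu
    obtain ⟨e, he, hde⟩ := det_unit_of_unit R π b c hπR hπnotunit hmax hb hc hu hv huu
    apply mem_Kint2_of_det R _ ?_ e he ?_
    · intro i j
      fin_cases i <;> fin_cases j <;> simp only [Aop, Matrix.cons_val', Matrix.cons_val_zero,
        Matrix.cons_val_one, Matrix.head_cons, Matrix.head_fin_const, Matrix.empty_val',
        Matrix.cons_val_fin_one, Matrix.of_apply]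
      · exact hu
      · exact R.mul_mem hv hcR
      · exact hv
      · exact R.add_mem hu (R.mul_mem hv hbR)
    · obtain ⟨h00, h01, h10, h11⟩ := Aop_entries b c u v
      rw [h00, h01, h10, h11]
      linear_combination hde

lemma coset_step (m : ℕ) (hπR : π ∈ R)
    (hb : ∃ y ∈ R, b = π * y) (hc : ∃ u ∈ R, (∃ u' ∈ R, u * u' = 1) ∧ c = π * u)
    {u v u' v' w : F} (hu : u ∈ R) (hv : v ∈ R) (hu' : u' ∈ R) (hv' : v' ∈ R)
    (hw : w ∈ R)
    (hA : Aop b c u v ∈ Kint2 R) (hA' : Aop b c u' v' ∈ Kint2 R)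
    (hrel : u * v' - v * u' = π ^ m * w) :
    ∃ k ∈ Kint2 R, Aop b c u' v' * Matrix.diagonal ![1, π ^ m] =
      Aop b c u v * Matrix.diagonal ![1, π ^ m] * k := by
  have hbR : b ∈ R := by obtain ⟨β, hβ, hbeq⟩ := hb; rw [hbeq]; exact R.mul_mem hπR hβ
  have hcR : c ∈ R := by obtain ⟨γ, hγ, _, hceq⟩ := hc; rw [hceq]; exact R.mul_mem hπR hγ
  have hπm : π ^ m ∈ R := pow_mem hπR m
  obtain ⟨e, he, hde0⟩ := Kint2.det_unit hA
  obtain ⟨e', he', hd'e'0⟩ := Kint2.det_unit hA'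
  obtain ⟨a00, a01, a10, a11⟩ := Aop_entries b c u v
  rw [a00, a01, a10, a11] at hde0
  obtain ⟨b00, b01, b10, b11⟩ := Aop_entries b c u' v'
  rw [b00, b01, b10, b11] at hd'e'0
  have hde : (u * u + u * v * b - c * (v * v)) * e = 1 := by linear_combination hde0
  have hd'e' : (u' * u' + u' * v' * b - c * (v' * v')) * e' = 1 := by linear_combination hd'e'0
  refine ⟨!![e * ((u + v * b) * u' - c * (v * v')), e * (c * π ^ m * (u * v' - v * u'));
      e * w, e * (u * u' + b * (u * v') - c * (v * v'))], ?_, ?_⟩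
  · apply mem_Kint2_of_det R _ ?_ ((u * u + u * v * b - c * (v * v)) * e')
      (R.mul_mem (R.sub_mem (R.add_mem (R.mul_mem hu hu) (R.mul_mem (R.mul_mem hu hv) hbR))
        (R.mul_mem hcR (R.mul_mem hv hv))) he') ?_
    · intro i j
      fin_cases i <;> fin_cases j <;> simp only [Matrix.cons_val', Matrix.cons_val_zero,
        Matrix.cons_val_one, Matrix.head_cons, Matrix.head_fin_const, Matrix.empty_val',
        Matrix.cons_val_fin_one, Matrix.of_apply]
      · exact R.mul_mem he (R.sub_mem (R.mul_mem (R.add_mem hu (R.mul_mem hv hbR)) hu')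
          (R.mul_mem hcR (R.mul_mem hv hv')))
      · exact R.mul_mem he (R.mul_mem (R.mul_mem hcR hπm)
          (R.sub_mem (R.mul_mem hu hv') (R.mul_mem hv hu')))
      · exact R.mul_mem he hw
      · exact R.mul_mem he (R.sub_mem (R.add_mem (R.mul_mem hu hu')
          (R.mul_mem hbR (R.mul_mem hu hv'))) (R.mul_mem hcR (R.mul_mem hv hv')))
    · have hdet2 : ((u + v * b) * u' - c * (v * v')) * (u * u' + b * (u * v') - c * (v * v'))
          - (c * π ^ m * (u * v' - v * u')) * w
          = (u * u + u * v * b - c * (v * v)) * (u' * u' + u' * v' * b - c * (v' * v')) := by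
        linear_combination (c * (u * v' - v * u')) * hrel
      have key : (e * ((u + v * b) * u' - c * (v * v')) * (e * (u * u' + b * (u * v')
            - c * (v * v'))) - e * (c * π ^ m * (u * v' - v * u')) * (e * w))
            * ((u * u + u * v * b - c * (v * v)) * e')
          = ((u * u + u * v * b - c * (v * v)) * e) * (((u * u + u * v * b - c * (v * v)) * e)
            * ((u' * u' + u' * v' * b - c * (v' * v')) * e')) := by
        linear_combination (e * e * (u * u + u * v * b - c * (v * v)) * e') * hdet2
      rw [hde, hd'e'] at key
      simp only [Matrix.cons_val', Matrix.cons_val_zero, Matrix.cons_val_one,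
        Matrix.head_cons, Matrix.head_fin_const, Matrix.empty_val',
        Matrix.cons_val_fin_one, Matrix.of_apply]
      linear_combination key
  · rw [AD_eq, AD_eq]
    ext i j
    fin_cases i <;> fin_cases j <;>
      simp [Matrix.mul_apply, Fin.sum_univ_two]
    · linear_combination (-u') * hde + (c * v * e) * hrel
    · linear_combination (-(c * π ^ m * v')) * hde
    · linear_combination (-v') * hde + (e * (u + v * b)) * hrel
    · linear_combination (-((u' + v' * b) * π ^ m)) * hde

lemma Sset_eq_iff (m : ℕ) (hπR : π ∈ R)
    (hb : ∃ y ∈ R, b = π * y) (hc : ∃ u ∈ R, (∃ u' ∈ R, u * u' = 1) ∧ c = π * u)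
    {u v u' v' : F} (hu : u ∈ R) (hv : v ∈ R) (hu' : u' ∈ R) (hv' : v' ∈ R)
    (hA : Aop b c u v ∈ Kint2 R) (hA' : Aop b c u' v' ∈ Kint2 R) :
    ({x | ∃ k ∈ Kint2 R, x = Aop b c u v * Matrix.diagonal ![1, π ^ m] * k} =
      {x | ∃ k ∈ Kint2 R, x = Aop b c u' v' * Matrix.diagonal ![1, π ^ m] * k}) ↔
      ∃ w ∈ R, u * v' - v * u' = π ^ m * w := by
  have hbR : b ∈ R := by obtain ⟨β, hβ, hbeq⟩ := hb; rw [hbeq]; exact R.mul_mem hπR hβ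
  have hcR : c ∈ R := by obtain ⟨γ, hγ, _, hceq⟩ := hc; rw [hceq]; exact R.mul_mem hπR hγ
  constructor
  · intro h
    have hmem : Aop b c u' v' * Matrix.diagonal ![1, π ^ m] ∈
        {x | ∃ k ∈ Kint2 R, x = Aop b c u' v' * Matrix.diagonal ![1, π ^ m] * k} :=
      ⟨1, Kint2.one_mem R, by rw [mul_one]⟩
    rw [← h] at hmem
    obtain ⟨k, hk, heq⟩ := hmem
    rw [AD_eq, AD_eq] at heq
    have h00 := congrFun (congrFun heq 0) 0
    have h10 := congrFun (congrFun heq 1) 0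
    simp only [Matrix.mul_apply, Fin.sum_univ_two, Matrix.cons_val', Matrix.cons_val_zero,
      Matrix.cons_val_one, Matrix.head_cons, Matrix.head_fin_const, Matrix.empty_val',
      Matrix.cons_val_fin_one, Matrix.of_apply] at h00 h10
    refine ⟨k 1 0 * (u * u + u * v * b - c * (v * v)),
      R.mul_mem (hk.1 1 0) (R.sub_mem (R.add_mem (R.mul_mem hu hu)
        (R.mul_mem (R.mul_mem hu hv) hbR)) (R.mul_mem hcR (R.mul_mem hv hv))), ?_⟩
    linear_combination u * h10 - v * h00
  · rintro ⟨w, hw, hrel⟩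
    have hrel' : u' * v - v' * u = π ^ m * (-w) := by linear_combination -hrel
    obtain ⟨k₁, hk₁, he₁⟩ := coset_step R π b c m hπR hb hc hu hv hu' hv' hw hA hA' hrel
    obtain ⟨k₂, hk₂, he₂⟩ := coset_step R π b c m hπR hb hc hu' hv' hu hv
      (R.neg_mem hw) hA' hA hrel'
    ext x
    constructor
    · rintro ⟨k, hk, rfl⟩
      exact ⟨k₂ * k, Kint2.mul_mem hk₂ hk, by rw [← mul_assoc, ← he₂]⟩
    · rintro ⟨k, hk, rfl⟩
      exact ⟨k₁ * k, Kint2.mul_mem hk₁ hk, by rw [← mul_assoc, ← he₁]⟩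

end Units


lemma card_quot_pow {R : Type*} [CommRing R] [IsDomain R] (p : R) (hp : p ≠ 0) (q : ℕ)
    (hq : Nat.card (R ⧸ Ideal.span {p}) = q) :
    ∀ k : ℕ, Nat.card (R ⧸ Ideal.span {p ^ k}) = q ^ k := by
  intro k
  induction k with
  | zero =>
    simp only [pow_zero]
    rw [Ideal.span_singleton_one]
    have : Subsingleton (R ⧸ (⊤ : Ideal R)) := Ideal.Quotient.subsingleton_iff.mpr rfl
    exact Nat.card_of_subsingleton (0 : R ⧸ (⊤ : Ideal R))
  | succ k ih =>
    set I := Ideal.span {p ^ (k+1)} with hI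
    set J := Ideal.span {p ^ k} with hJ
    have hle : I ≤ J := by
      rw [hI, hJ, Ideal.span_singleton_le_span_singleton]
      exact pow_dvd_pow p (Nat.le_succ k)
    set φ : R ⧸ I →+* R ⧸ J := Ideal.Quotient.factor hle with hφ
    have hsurj : Function.Surjective φ := by
      rintro ⟨y⟩
      exact ⟨Ideal.Quotient.mk I y, rfl⟩
    set K : AddSubgroup (R ⧸ I) := AddMonoidHom.ker φ.toAddMonoidHom with hK
    have e1 : (R ⧸ I) ⧸ K ≃+ R ⧸ J :=
      QuotientAddGroup.quotientKerEquivOfSurjective φ.toAddMonoidHom hsurj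
    -- ψ : R →+ R ⧸ I, x ↦ mk (p^k * x)
    set ψ : R →+ R ⧸ I := AddMonoidHom.mk' (fun x => Ideal.Quotient.mk I (p ^ k * x))
      (by intro a a'; simp [mul_add]) with hψ
    have hker : ψ.ker = (Ideal.span {p} : Ideal R).toAddSubgroup := by
      ext x
      simp only [AddMonoidHom.mem_ker, hψ, AddMonoidHom.mk'_apply,
        Ideal.Quotient.eq_zero_iff_mem, hI, Ideal.mem_span_singleton,
        Submodule.mem_toAddSubgroup]
      rw [pow_succ, mul_comm (p ^ k) p]
      constructor
      · rintro ⟨z, hz⟩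
        refine ⟨z, mul_left_cancel₀ (pow_ne_zero k hp) ?_⟩
        rw [hz]; ring
      · rintro ⟨z, hz⟩
        exact ⟨z, by rw [hz]; ring⟩
    have hrange : ψ.range = K := by
      ext z
      simp only [AddMonoidHom.mem_range, hK, AddMonoidHom.mem_ker]
      constructor
      · rintro ⟨x, rfl⟩
        simp only [hψ, AddMonoidHom.mk'_apply]
        show φ (Ideal.Quotient.mk I (p ^ k * x)) = 0
        rw [hφ]
        rw [Ideal.Quotient.factor_mk]
        rw [Ideal.Quotient.eq_zero_iff_mem, hJ, Ideal.mem_span_singleton]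
        exact ⟨x, rfl⟩
      · intro hz
        obtain ⟨y, rfl⟩ := Ideal.Quotient.mk_surjective (I := I) z
        have : y ∈ J := by
          rw [← Ideal.Quotient.eq_zero_iff_mem]
          exact hz
        rw [hJ, Ideal.mem_span_singleton] at this
        obtain ⟨x, rfl⟩ := this
        exact ⟨x, rfl⟩
    have e2 : R ⧸ ψ.ker ≃+ ψ.range := QuotientAddGroup.quotientKerEquivRange ψ
    have cardK : Nat.card K = q := by
      rw [← hq, ← hrange, ← Nat.card_congr e2.toEquiv, hker]
      rfl
    have := AddSubgroup.card_eq_card_quotient_mul_card_addSubgroup K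
    rw [Nat.card_congr e1.toEquiv, ih, cardK] at this
    rw [this, pow_succ]

/-- Let `F` be a nonarchimedean local field with valuation ring `R`, uniformizer `π`
and residue field of size `q`.  Let `L = F(λ)` be a ramified quadratic extension,
`λ` a uniformizer of `L` with minimal polynomial `x² − bx − c` (so `ord_π c = 1`,
`ord_π b ≥ 1`), with `L^×` embedded in `GL₂(F)` as the matrices `[[u,vc],[v,u+vb]]`
and `U_L = L^× ∩ GL₂(O_F)`.  Then for every `m ≥ 1`, the double coset
`U_L · diag(1, π^m) · GL₂(O_F)` is a union of exactly `q^m` left `GL₂(O_F)`-cosets. -/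
theorem ramified_double_coset_count
    (R : Subring F) (π : F) (q : ℕ)
    (hval : ∀ x : F, x ∈ R ∨ (x ≠ 0 ∧ x⁻¹ ∈ R))
    (hπR : π ∈ R) (hπ0 : π ≠ 0) (hπnotunit : ¬∃ y ∈ R, π * y = 1)
    (hmax : ∀ x ∈ R, (∃ y ∈ R, x * y = 1) ∨ (∃ y ∈ R, x = π * y))
    (hq : Nat.card (R ⧸ Ideal.span {(⟨π, hπR⟩ : R)}) = q) (hq2 : 2 ≤ q)
    (b c : F)
    (hb : ∃ y ∈ R, b = π * y)
    (hc : ∃ u ∈ R, (∃ u' ∈ R, u * u' = 1) ∧ c = π * u)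
    (hirr : ∀ x : F, x ^ 2 - b * x - c ≠ 0)
    (m : ℕ) (hm : 1 ≤ m) :
    Nat.card {s : Set (Matrix (Fin 2) (Fin 2) F) //
      ∃ u v : F, u ∈ R ∧ v ∈ R ∧
        (!![u, v * c; v, u + v * b]) ∈ Kint2 R ∧
        s = {x | ∃ k ∈ Kint2 R,
          x = !![u, v * c; v, u + v * b] * Matrix.diagonal ![1, π ^ m] * k}} =
      q ^ m := by
  classical
  set p : R := ⟨π, hπR⟩ with hp
  have hp0 : p ≠ 0 := fun h => hπ0 (congrArg Subtype.val h)
  have cardQ : Nat.card (R ⧸ Ideal.span {p ^ m}) = q ^ m := card_quot_pow p hp0 q hq m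
  have hA1 : ∀ t : R, Aop b c 1 (t : F) ∈ Kint2 R := fun t =>
    (aop_mem_Kint2_iff R π b c hπR hπnotunit hmax hb hc R.one_mem t.2).mpr
      ⟨1, R.one_mem, one_mul 1⟩
  have hWit : ∀ s : {s : Set (Matrix (Fin 2) (Fin 2) F) //
      ∃ u v : F, u ∈ R ∧ v ∈ R ∧
        (!![u, v * c; v, u + v * b]) ∈ Kint2 R ∧
        s = {x | ∃ k ∈ Kint2 R,
          x = !![u, v * c; v, u + v * b] * Matrix.diagonal ![1, π ^ m] * k}},
      ∃ t : R, s.1 = {x | ∃ k ∈ Kint2 R,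
        x = Aop b c 1 (t : F) * Matrix.diagonal ![1, π ^ m] * k} := by
    rintro ⟨s, u, v, hu, hv, hA, rfl⟩
    have hA' : Aop b c u v ∈ Kint2 R := hA
    obtain ⟨y, hy, huy⟩ :=
      (aop_mem_Kint2_iff R π b c hπR hπnotunit hmax hb hc hu hv).mp hA'
    refine ⟨⟨v * y, R.mul_mem hv hy⟩, ?_⟩
    exact (Sset_eq_iff R π b c m hπR hb hc hu hv R.one_mem (R.mul_mem hv hy) hA'
      (hA1 ⟨v * y, R.mul_mem hv hy⟩)).mpr
      ⟨0, R.zero_mem, by push_cast; linear_combination v * huy⟩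
  have hUniq : ∀ t t' : R,
      ({x | ∃ k ∈ Kint2 R, x = Aop b c 1 (t : F) * Matrix.diagonal ![1, π ^ m] * k} =
        {x | ∃ k ∈ Kint2 R, x = Aop b c 1 (t' : F) * Matrix.diagonal ![1, π ^ m] * k}) ↔
      Ideal.Quotient.mk (Ideal.span {p ^ m}) t = Ideal.Quotient.mk (Ideal.span {p ^ m}) t' := by
    intro t t'
    rw [Sset_eq_iff R π b c m hπR hb hc R.one_mem t.2 R.one_mem t'.2 (hA1 t) (hA1 t'),
      Ideal.Quotient.eq, Ideal.mem_span_singleton]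
    constructor
    · rintro ⟨w, hwR, hrel⟩
      refine ⟨⟨-w, R.neg_mem hwR⟩, Subtype.ext ?_⟩
      push_cast
      linear_combination -hrel
    · rintro ⟨z, hz⟩
      refine ⟨-(z : F), R.neg_mem z.2, ?_⟩
      have := congrArg Subtype.val hz
      push_cast at this
      linear_combination -this
  rw [← cardQ]
  choose T hT using hWit
  apply Nat.card_eq_of_bijective (fun s => Ideal.Quotient.mk (Ideal.span {p ^ m}) (T s))
  constructor
  · intro s s' h
    apply Subtype.ext
    rw [hT s, hT s']
    exact (hUniq (T s) (T s')).mpr h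
  · intro x
    obtain ⟨t, rfl⟩ := Ideal.Quotient.mk_surjective x
    refine ⟨⟨{x | ∃ k ∈ Kint2 R,
        x = !![(1:F), (t:F) * c; (t:F), 1 + (t:F) * b] * Matrix.diagonal ![1, π ^ m] * k},
      1, (t : F), R.one_mem, t.2, hA1 t, rfl⟩, ?_⟩
    exact (hUniq _ t).mp (hT _).symm

end
end
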